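/- Let Z and X be real random variables on a probability space (Ω, μ), let ρ be the law of the pair (Z, X), and let F_{X|z} denote the conditional cumulative distribution function of X given Z = z. Suppose that for ρ-almost every z, the function x ↦ F_{X|z}(x) is continuous. Let F̃ be any cumulative distribution function on ℝ with generalized inverse F̃⁻¹(p) = inf{x ∈ ℝ : F̃(x) ≥ p}. Then the random variable X̃(ω) = F̃⁻¹(F_{X|Z(ω)}(X(ω))) is independent of Z and has cumulative distribution function F̃; that is, the map g = F̃⁻¹ ∘ F_{X|z} optimally transports X given Z = z to a variable independent of Z. -/

import Mathlib

open MeasureTheory ProbabilityTheory Set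
open Filter Topology

/-- Generalized inverse (quantile function) of a cumulative distribution function:
`G⁻¹(p) = inf {x : ℝ | G x ≥ p}`. -/
noncomputable def quantileFn (G : ℝ → ℝ) (p : ℝ) : ℝ :=
  sInf {x : ℝ | p ≤ G x}


section quantile

variable (ν : Measure ℝ) [IsProbabilityMeasure ν]

lemma bddBelow_quantile_set {p : ℝ} (hp0 : 0 < p) : BddBelow {x : ℝ | p ≤ cdf ν x} := by
  obtain ⟨y₀, hy₀⟩ := (eventually_atBot.1 ((tendsto_cdf_atBot ν).eventually (eventually_lt_nhds hp0)))
  refine ⟨y₀, fun s hs => ?_⟩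
  by_contra h
  exact absurd hs.out (not_le.2 (hy₀ s (le_of_not_ge h)))

lemma nonempty_quantile_set {p : ℝ} (hp1 : p < 1) : {x : ℝ | p ≤ cdf ν x}.Nonempty := by
  obtain ⟨y, hy⟩ := ((tendsto_cdf_atTop ν).eventually (eventually_gt_nhds hp1)).exists
  exact ⟨y, hy.le⟩

lemma quantileFn_le_iff {p x : ℝ} (hp0 : 0 < p) (hp1 : p < 1) :
    quantileFn (cdf ν) p ≤ x ↔ p ≤ cdf ν x := by
  constructor
  · intro h
    have hbdd := bddBelow_quantile_set ν hp0
    have hne := nonempty_quantile_set ν hp1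
    have hrc : p ≤ cdf ν (sInf {x : ℝ | p ≤ cdf ν x}) := by
      refine ge_of_tendsto (((cdf ν).right_continuous _).mono_left
        (nhdsWithin_mono _ Ioi_subset_Ici_self)) ?_
      filter_upwards [self_mem_nhdsWithin] with y hy
      obtain ⟨s, hs, hsy⟩ := (csInf_lt_iff hbdd hne).1 hy
      exact hs.out.trans ((cdf ν).mono hsy.le)
    exact hrc.trans ((cdf ν).mono h)
  · intro h
    exact csInf_le (bddBelow_quantile_set ν hp0) h

lemma quantileFn_monotoneOn : MonotoneOn (quantileFn (cdf ν)) (Ioo (0:ℝ) 1) := by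
  intro p hp q hq hpq
  exact csInf_le_csInf (bddBelow_quantile_set ν hp.1) (nonempty_quantile_set ν hq.2)
    (fun x hx => hpq.trans hx.out)

lemma quantileFn_of_nonpos {p : ℝ} (hp : p ≤ 0) : quantileFn (cdf ν) p = 0 := by
  have : {x : ℝ | p ≤ cdf ν x} = univ := eq_univ_of_forall fun x => hp.trans (cdf_nonneg ν x)
  rw [quantileFn, this]
  have : ¬BddBelow (univ : Set ℝ) := fun ⟨b, hb⟩ => absurd (hb (mem_univ (b - 1))) (by simp)
  rw [csInf_of_not_bddBelow this, Real.sInf_empty]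

lemma quantileFn_of_one_lt {p : ℝ} (hp : 1 < p) : quantileFn (cdf ν) p = 0 := by
  have : {x : ℝ | p ≤ cdf ν x} = ∅ :=
    eq_empty_of_forall_notMem fun x hx => absurd (hx.out.trans (cdf_le_one ν x)) (not_le.2 hp)
  rw [quantileFn, this]
  exact Real.sInf_empty

lemma measurable_quantileFn : Measurable (quantileFn (cdf ν)) := by
  apply measurable_of_Iio
  intro c
  have hdecomp : quantileFn (cdf ν) ⁻¹' Iio c =
      (Iic 0 ∩ quantileFn (cdf ν) ⁻¹' Iio c) ∪ (Ioo 0 1 ∩ quantileFn (cdf ν) ⁻¹' Iio c)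
        ∪ ({1} ∩ quantileFn (cdf ν) ⁻¹' Iio c) ∪ (Ioi 1 ∩ quantileFn (cdf ν) ⁻¹' Iio c) := by
    ext p
    simp only [mem_union, mem_inter_iff, mem_Iic, mem_Ioo, mem_singleton_iff, mem_Ioi]
    constructor
    · intro h
      rcases le_or_gt p 0 with h0 | h0
      · exact Or.inl (Or.inl (Or.inl ⟨h0, h⟩))
      rcases lt_trichotomy p 1 with h1 | h1 | h1
      · exact Or.inl (Or.inl (Or.inr ⟨⟨h0, h1⟩, h⟩))
      · exact Or.inl (Or.inr ⟨h1, h⟩)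
      · exact Or.inr ⟨h1, h⟩
    · rintro ((( ⟨-, h⟩ | ⟨-, h⟩) | ⟨-, h⟩) | ⟨-, h⟩) <;> exact h
  rw [hdecomp]
  have h1 : MeasurableSet (Iic (0:ℝ) ∩ quantileFn (cdf ν) ⁻¹' Iio c) := by
    rcases lt_or_ge 0 c with hc | hc
    · have : Iic (0:ℝ) ∩ quantileFn (cdf ν) ⁻¹' Iio c = Iic 0 :=
        inter_eq_left.2 fun p hp => by
          simp only [mem_preimage, mem_Iio, quantileFn_of_nonpos ν hp.out]; exact hc
      rw [this]; exact measurableSet_Iic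
    · have : Iic (0:ℝ) ∩ quantileFn (cdf ν) ⁻¹' Iio c = ∅ :=
        eq_empty_of_forall_notMem fun p ⟨hp, hp'⟩ => by
          rw [mem_preimage, mem_Iio, quantileFn_of_nonpos ν hp] at hp'
          exact absurd hp' (not_lt.2 hc)
      rw [this]; exact MeasurableSet.empty
  have h2 : MeasurableSet (Ioo (0:ℝ) 1 ∩ quantileFn (cdf ν) ⁻¹' Iio c) := by
    refine Set.OrdConnected.measurableSet ⟨fun x hx z hz y hy => ?_⟩
    refine ⟨⟨hx.1.1.trans_le hy.1, hy.2.trans_lt hz.1.2⟩, ?_⟩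
    have : quantileFn (cdf ν) y ≤ quantileFn (cdf ν) z :=
      quantileFn_monotoneOn ν ⟨hx.1.1.trans_le hy.1, hy.2.trans_lt hz.1.2⟩ hz.1 hy.2
    exact this.trans_lt hz.2
  have h3 : MeasurableSet ({(1:ℝ)} ∩ quantileFn (cdf ν) ⁻¹' Iio c) :=
    (Set.subsingleton_singleton.anti inter_subset_left).measurableSet
  have h4 : MeasurableSet (Ioi (1:ℝ) ∩ quantileFn (cdf ν) ⁻¹' Iio c) := by
    rcases lt_or_ge 0 c with hc | hc
    · have : Ioi (1:ℝ) ∩ quantileFn (cdf ν) ⁻¹' Iio c = Ioi 1 :=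
        inter_eq_left.2 fun p hp => by
          simp only [mem_preimage, mem_Iio, quantileFn_of_one_lt ν hp.out]; exact hc
      rw [this]; exact measurableSet_Ioi
    · have : Ioi (1:ℝ) ∩ quantileFn (cdf ν) ⁻¹' Iio c = ∅ :=
        eq_empty_of_forall_notMem fun p ⟨hp, hp'⟩ => by
          rw [mem_preimage, mem_Iio, quantileFn_of_one_lt ν hp] at hp'
          exact absurd hp' (not_lt.2 hc)
      rw [this]; exact MeasurableSet.empty
  exact ((h1.union h2).union h3).union h4

end quantile

section kernel

lemma measurable_condCDF_prod (ρ : Measure (ℝ × ℝ)) :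
    Measurable fun q : ℝ × ℝ => condCDF ρ q.1 q.2 := by
  apply measurable_of_Iio
  intro c
  have key : (fun q : ℝ × ℝ => condCDF ρ q.1 q.2) ⁻¹' Iio c
      = ⋃ r : ℚ, {a : ℝ | condCDF ρ a r < c} ×ˢ Iio (r : ℝ) := by
    ext ⟨a, x⟩
    simp only [mem_preimage, mem_Iio, mem_iUnion, mem_prod, mem_setOf_eq]
    constructor
    · intro h
      have hrc : (fun y => condCDF ρ a y) ⁻¹' Iio c ∈ 𝓝[Ioi x] x :=
        nhdsWithin_mono x Ioi_subset_Ici_self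
          (((condCDF ρ a).right_continuous x) (Iio_mem_nhds h))
      have hrc' : ∀ᶠ y in 𝓝[>] x, condCDF ρ a y < c := hrc
      obtain ⟨y, hy, hxy⟩ := (hrc'.and eventually_mem_nhdsWithin).exists
      obtain ⟨r, hr1, hr2⟩ := exists_rat_btwn (show x < y from hxy)
      exact ⟨r, lt_of_le_of_lt ((condCDF ρ a).mono hr2.le) hy, hr1⟩
    · rintro ⟨r, h1, h2⟩
      exact lt_of_le_of_lt ((condCDF ρ a).mono h2.le) h1
  rw [key]
  exact MeasurableSet.iUnion fun r =>
    ((measurable_condCDF ρ r measurableSet_Iio).prod measurableSet_Iio)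

variable (ρ : Measure (ℝ × ℝ)) [IsProbabilityMeasure ρ]

lemma condKernel_ae_eq_condCDF_measure :
    ∀ᵐ z ∂ρ.fst, ρ.condKernel z = (condCDF ρ z).measure := by
  have h1 : ∀ q : ℚ, ∀ᵐ z ∂ρ.fst,
      ρ.condKernel z (Iic (q : ℝ)) = ENNReal.ofReal (condCDF ρ z q) := by
    intro q
    refine ae_eq_of_forall_setLIntegral_eq_of_sigmaFinite
      (Kernel.measurable_coe _ measurableSet_Iic)
      ((measurable_condCDF ρ q).ennreal_ofReal) fun s hs _ => ?_
    rw [setLIntegral_condCDF ρ _ hs]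
    have : ∫⁻ z in s, ρ.condKernel z (Iic (q : ℝ)) ∂ρ.fst
        = (ρ.fst ⊗ₘ ρ.condKernel) (s ×ˢ Iic (q : ℝ)) := by
      rw [Measure.compProd_apply (hs.prod measurableSet_Iic)]
      rw [← lintegral_indicator hs]
      congr 1
      ext z
      classical
      rw [indicator_apply]
      by_cases hz : z ∈ s <;> simp [hz, Set.prod, Prod.mk]
    rw [this, ρ.disintegrate ρ.condKernel]
  have h2 : ∀ᵐ z ∂ρ.fst, ∀ q : ℚ,
      ρ.condKernel z (Iic (q : ℝ)) = ENNReal.ofReal (condCDF ρ z q) := ae_all_iff.2 h1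
  filter_upwards [h2] with z hz
  refine MeasureTheory.ext_of_generate_finite _
    (by rw [BorelSpace.measurable_eq (α := ℝ), Real.borel_eq_generateFrom_Iic_rat])
    Real.isPiSystem_Iic_rat (fun s hs => ?_) ?_
  · simp only [mem_iUnion, mem_singleton_iff] at hs
    obtain ⟨q, rfl⟩ := hs
    rw [hz q, measure_condCDF_Iic]
  · rw [measure_univ, measure_condCDF_univ]

end kernel

section pit

lemma stieltjes_measure_sublevel {F : StieltjesFunction ℝ} (hF : Continuous F)
    (hbot : Filter.Tendsto F atBot (𝓝 0)) (htop : Filter.Tendsto F atTop (𝓝 1))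
    {p : ℝ} (hp0 : 0 ≤ p) (hp1 : p ≤ 1) :
    F.measure {x | F x ≤ p} = ENNReal.ofReal p := by
  have hIic : ∀ x, F.measure (Iic x) = ENNReal.ofReal (F x) := fun x => by
    rw [F.measure_Iic hbot]; simp
  by_cases hne : {x | F x ≤ p}.Nonempty
  · by_cases hub : ∃ u, ¬ F u ≤ p
    · obtain ⟨u, hu⟩ := hub
      have hbdd : BddAbove {x | F x ≤ p} := by
        refine ⟨u, fun t ht => ?_⟩
        by_contra h
        exact hu ((F.mono (le_of_not_ge h)).trans ht.out)
      set a := sSup {x | F x ≤ p} with ha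
      have hclosed : IsClosed {x | F x ≤ p} := isClosed_Iic.preimage hF
      have haT : a ∈ {x | F x ≤ p} := hclosed.csSup_mem hne hbdd
      have hFa_le : F a ≤ p := haT
      have hFa_ge : p ≤ F a := by
        refine ge_of_tendsto ((hF.tendsto a).mono_left (nhdsWithin_le_nhds (s := Ioi a))) ?_
        filter_upwards [eventually_mem_nhdsWithin] with y (hy : a < y)
        have : y ∉ {x | F x ≤ p} := fun hyT => absurd (le_csSup hbdd hyT) (not_le.2 hy)
        exact (lt_of_not_ge this).le
      have hT : {x | F x ≤ p} = Iic a := by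
        ext t
        exact ⟨fun ht => le_csSup hbdd ht, fun ht => le_trans (F.mono ht) hFa_le⟩
      rw [hT, hIic, le_antisymm hFa_le hFa_ge]
    · push_neg at hub
      have huniv : {x | F x ≤ p} = univ := eq_univ_of_forall hub
      have h1p : (1:ℝ) ≤ p := le_of_tendsto' htop hub
      have hp : p = 1 := le_antisymm hp1 h1p
      rw [huniv, hp]
      rw [F.measure_univ hbot htop]
      simp
  · have hall : ∀ x, p < F x := fun x => lt_of_not_ge fun hx => hne ⟨x, hx⟩
    have hp0' : p ≤ 0 := ge_of_tendsto' hbot fun x => (hall x).le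
    have : {x | F x ≤ p} = ∅ := eq_empty_iff_forall_notMem.2 fun x hx => absurd hx.out (not_le.2 (hall x))
    rw [this, measure_empty, ENNReal.ofReal_eq_zero.2 (le_antisymm hp0' hp0 ▸ le_rfl)]

end pit

/-- **Optimal transport of `X` given `Z = z` to a variable independent of `Z`.**
Let `ρ` be the joint law of `(Z, X)` and `F_{X|z} = condCDF ρ z` the conditional cdf of `X`
given `Z = z`, continuous for `ρ`-a.e. `z`, and let `F̃` be the cdf of any probability
distribution `ν` on `ℝ`. Then `X̃(ω) = F̃⁻¹(F_{X|Z(ω)}(X(ω)))` is independent of `Z` and has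
cumulative distribution function `F̃`. -/
theorem quantile_comp_condCDF_indep_and_cdf
    {Ω : Type*} [MeasurableSpace Ω] (μ : Measure Ω) [IsProbabilityMeasure μ]
    (Z X : Ω → ℝ) (hZ : Measurable Z) (hX : Measurable X)
    (ρ : Measure (ℝ × ℝ)) (hρ : ρ = μ.map fun ω => (Z ω, X ω))
    (hcont : ∀ᵐ z ∂ρ.fst, Continuous (condCDF ρ z))
    (ν : Measure ℝ) [IsProbabilityMeasure ν] :
    IndepFun (fun ω => quantileFn (cdf ν) (condCDF ρ (Z ω) (X ω))) Z μ ∧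
      ∀ x : ℝ,
        cdf (μ.map fun ω => quantileFn (cdf ν) (condCDF ρ (Z ω) (X ω))) x = cdf ν x := by
  haveI hρprob : IsProbabilityMeasure ρ := by
    rw [hρ]; exact Measure.isProbabilityMeasure_map (hZ.prodMk hX).aemeasurable
  set U : Ω → ℝ := fun ω => condCDF ρ (Z ω) (X ω) with hUdef
  have hUm : Measurable U := (measurable_condCDF_prod ρ).comp (hZ.prodMk hX)
  set Xt : Ω → ℝ := fun ω => quantileFn (cdf ν) (U ω) with hXtdef
  have hXtm : Measurable Xt := (measurable_quantileFn ν).comp hUm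
  have hfst : ρ.fst = μ.map Z := by rw [hρ, Measure.fst_map_prodMk hX]
  -- the kernel-level uniform distribution property
  have hker : ∀ p : ℝ, 0 ≤ p → p ≤ 1 → ∀ᵐ z ∂ρ.fst,
      ρ.condKernel z {x | condCDF ρ z x ≤ p} = ENNReal.ofReal p := by
    intro p hp0 hp1
    filter_upwards [condKernel_ae_eq_condCDF_measure ρ, hcont] with z hz hc
    rw [hz]
    exact stieltjes_measure_sublevel hc (tendsto_condCDF_atBot ρ z)
      (tendsto_condCDF_atTop ρ z) hp0 hp1
  -- KEY : joint distribution of (U, Z)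
  have KEY : ∀ p : ℝ, 0 ≤ p → p ≤ 1 → ∀ A : Set ℝ, MeasurableSet A →
      μ ({ω | U ω ≤ p} ∩ Z ⁻¹' A) = ENNReal.ofReal p * μ (Z ⁻¹' A) := by
    intro p hp0 hp1 A hA
    have hs : MeasurableSet {q : ℝ × ℝ | condCDF ρ q.1 q.2 ≤ p ∧ q.1 ∈ A} := by
      exact ((measurable_condCDF_prod ρ) measurableSet_Iic).inter (measurable_fst hA)
    have h1 : {ω | U ω ≤ p} ∩ Z ⁻¹' A
        = (fun ω => (Z ω, X ω)) ⁻¹' {q : ℝ × ℝ | condCDF ρ q.1 q.2 ≤ p ∧ q.1 ∈ A} := by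
      ext ω; simp [hUdef, mem_inter_iff]
    rw [h1, ← Measure.map_apply (hZ.prodMk hX) hs, ← hρ]
    rw [show ρ {q : ℝ × ℝ | condCDF ρ q.1 q.2 ≤ p ∧ q.1 ∈ A}
        = (ρ.fst ⊗ₘ ρ.condKernel) {q : ℝ × ℝ | condCDF ρ q.1 q.2 ≤ p ∧ q.1 ∈ A} from by
      rw [ρ.disintegrate ρ.condKernel]]
    rw [Measure.compProd_apply hs]
    have h2 : (fun z => ρ.condKernel z
          (Prod.mk z ⁻¹' {q : ℝ × ℝ | condCDF ρ q.1 q.2 ≤ p ∧ q.1 ∈ A}))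
        = A.indicator (fun z => ρ.condKernel z {x | condCDF ρ z x ≤ p}) := by
      funext z
      classical
      rw [indicator_apply]
      by_cases hz : z ∈ A
      · simp only [hz, if_true]
        congr 1
        ext x; simp [hz]
      · simp only [hz, if_false]
        have : Prod.mk z ⁻¹' {q : ℝ × ℝ | condCDF ρ q.1 q.2 ≤ p ∧ q.1 ∈ A} = ∅ := by
          ext x; simp [hz]
        rw [this, measure_empty]
    rw [h2, lintegral_indicator hA]
    rw [lintegral_congr_ae (ae_restrict_of_ae (hker p hp0 hp1))]
    rw [setLIntegral_const, hfst, Measure.map_apply hZ hA]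
  -- null sets where U hits 0 or 1
  have hU0 : μ {ω | U ω ≤ 0} = 0 := by
    have := KEY 0 le_rfl zero_le_one univ MeasurableSet.univ
    simpa using this
  have hU1 : μ {ω | U ω = 1} = 0 := by
    have hle : ∀ n : ℕ, μ {ω | U ω = 1} ≤ ENNReal.ofReal (1 / (n + 1)) := by
      intro n
      have h1n : (1:ℝ) / (n + 1) ≤ 1 := by
        rw [div_le_one (by positivity)]
        have : (0:ℝ) ≤ n := Nat.cast_nonneg n
        linarith
      have hp0 : (0:ℝ) ≤ 1 - 1 / (n + 1) := by linarith
      have hp1 : (1:ℝ) - 1 / (n + 1) ≤ 1 := by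
        have : (0:ℝ) < 1 / (n + 1) := by positivity
        linarith
      have hkey := KEY (1 - 1 / (n + 1)) hp0 hp1 univ MeasurableSet.univ
      simp only [preimage_univ, inter_univ, measure_univ, mul_one] at hkey
      have hsub : {ω | U ω = 1} ⊆ {ω | U ω ≤ 1 - 1 / (n + 1)}ᶜ := by
        intro ω hω
        simp only [mem_compl_iff, mem_setOf_eq, hω.out, not_le]
        have : (0:ℝ) < 1 / (n + 1) := by positivity
        linarith
      refine le_trans (measure_mono hsub) ?_
      have hms : MeasurableSet {ω | U ω ≤ 1 - 1 / (n + 1)} := hUm measurableSet_Iic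
      rw [measure_compl hms (measure_ne_top μ _), measure_univ, hkey]
      rw [← ENNReal.ofReal_one, ← ENNReal.ofReal_sub _ hp0]
      norm_num
    have htend : Filter.Tendsto (fun n : ℕ => ENNReal.ofReal (1 / (n + 1))) atTop (𝓝 0) := by
      rw [← ENNReal.ofReal_zero]
      exact (ENNReal.continuous_ofReal.tendsto 0).comp tendsto_one_div_add_atTop_nhds_zero_nat
    exact le_antisymm (ge_of_tendsto' htend hle) zero_le
  -- the main event computation
  have event : ∀ x : ℝ, ∀ A : Set ℝ, MeasurableSet A →
      μ (Xt ⁻¹' Iic x ∩ Z ⁻¹' A) = ENNReal.ofReal (cdf ν x) * μ (Z ⁻¹' A) := by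
    intro x A hA
    have hgood : ∀ᵐ ω ∂μ, ¬(U ω ≤ 0) ∧ U ω ≠ 1 := by
      have h0 : ∀ᵐ ω ∂μ, ¬(U ω ≤ 0) := (measure_eq_zero_iff_ae_notMem.1 hU0)
      have h1 : ∀ᵐ ω ∂μ, ¬(U ω = 1) := (measure_eq_zero_iff_ae_notMem.1 hU1)
      filter_upwards [h0, h1] with ω hω0 hω1 using ⟨hω0, hω1⟩
    have hae : (Xt ⁻¹' Iic x ∩ Z ⁻¹' A : Set Ω) =ᵐ[μ] (U ⁻¹' Iic (cdf ν x) ∩ Z ⁻¹' A : Set Ω) := by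
      rw [Filter.eventuallyEq_set]
      filter_upwards [hgood] with ω hω
      have hU0' : 0 < U ω := lt_of_not_ge hω.1
      have hU1' : U ω < 1 := lt_of_le_of_ne (condCDF_le_one ρ _ _) hω.2
      simp only [mem_inter_iff, mem_preimage, mem_Iic, mem_setOf_eq]
      rw [quantileFn_le_iff ν hU0' hU1']
    rw [measure_congr hae]
    exact KEY (cdf ν x) (cdf_nonneg ν x) (cdf_le_one ν x) A hA
  constructor
  · rw [indepFun_iff_measure_inter_preimage_eq_mul]
    intro s t hs ht
    haveI : IsFiniteMeasure ((μ.restrict (Z ⁻¹' t)).map Xt) := by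
      exact Measure.isFiniteMeasure_map _ _
    have hext : (μ.restrict (Z ⁻¹' t)).map Xt = μ (Z ⁻¹' t) • μ.map Xt := by
      refine Measure.ext_of_Iic _ _ fun a => ?_
      rw [Measure.map_apply hXtm measurableSet_Iic,
        Measure.restrict_apply (hXtm measurableSet_Iic), event a t ht]
      rw [Measure.smul_apply, Measure.map_apply hXtm measurableSet_Iic]
      have := event a univ MeasurableSet.univ
      simp only [preimage_univ, inter_univ, measure_univ, mul_one] at this
      rw [this, smul_eq_mul, mul_comm]
    have h1 := congrArg (fun m : Measure ℝ => m s) hext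
    simp only [Measure.map_apply hXtm hs, Measure.restrict_apply (hXtm hs),
      Measure.smul_apply, smul_eq_mul] at h1
    rw [h1, mul_comm]
  · intro x
    haveI : IsProbabilityMeasure (μ.map Xt) := Measure.isProbabilityMeasure_map hXtm.aemeasurable
    rw [cdf_eq_real, Measure.real, Measure.map_apply hXtm measurableSet_Iic]
    have := event x univ MeasurableSet.univ
    simp only [preimage_univ, inter_univ, measure_univ, mul_one] at this
    rw [this, ENNReal.toReal_ofReal (cdf_nonneg ν x)]
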